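/- arXiv:2404.09070 — 3 statements merged into one kernel-verified Lean document; each statement's English description precedes it below -/
import Mathlib

section
/- The rational group algebra of the alternating group A₄ decomposes as a product of three simple algebras: there is an isomorphism of ℚ-algebras ℚ[A₄] ≅ ℚ × ℚ(θ) × Mat₃(ℚ), where ℚ(θ) is the third cyclotomic field (θ a primitive cube root of unity) and Mat₃(ℚ) is the algebra of 3×3 rational matrices. -/
/-- `A₄`, the alternating group on 4 letters. -/
abbrev A4 : Type := alternatingGroup (Fin 4)

open Equiv Equiv.Perm Matrix IsCyclotomicExtension

private def ccP : Perm (Fin 4) := c[0, 1, 2]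

private def V4L : List (Perm (Fin 4)) :=
  [1, c[0,1] * c[2,3], c[0,2] * c[1,3], c[0,3] * c[1,2]]

private def om (g : A4) : ZMod 3 :=
  if (g : Perm (Fin 4)) ∈ V4L then 0
  else if (g : Perm (Fin 4)) ∈ V4L.map (· * ccP) then 1 else 2

private lemma om_mul : ∀ g h : A4, om (g * h) = om g + om h := by decide

private def rhZ (g : A4) : Matrix (Fin 3) (Fin 3) ℤ := fun i j =>
  (if (g : Perm (Fin 4)) j.castSucc = i.castSucc then 1 else 0)
  - (if (g : Perm (Fin 4)) 3 = i.castSucc then 1 else 0)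

private lemma rhZ_one : rhZ 1 = 1 := by decide

set_option maxRecDepth 10000 in
private lemma rhZ_mul : ∀ g h : A4, rhZ (g * h) = rhZ g * rhZ h := by decide

set_option maxRecDepth 20000 in
private lemma rhZ_orth : ∀ i j : Fin 3, (4 : ℤ) • Matrix.single i j (1:ℤ) =
    ∑ g : A4, (rhZ g⁻¹ j i) • rhZ g := by decide

private noncomputable abbrev KK : Type := CyclotomicField 3 ℚ

private instance : IsCyclotomicExtension {3} ℚ (CyclotomicField 3 ℚ) :=
  CyclotomicField.isCyclotomicExtension 3 ℚ

private noncomputable def ζ : KK := zeta 3 ℚ (CyclotomicField 3 ℚ)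

private lemma hζ : IsPrimitiveRoot ζ 3 := zeta_spec 3 ℚ (CyclotomicField 3 ℚ)

private lemma zeta_pow_mod (n : ℕ) : ζ ^ (n % 3) = ζ ^ n := by
  conv_rhs => rw [← Nat.div_add_mod n 3, pow_add, pow_mul, (show ζ ^ 3 = 1 from hζ.pow_eq_one), one_pow, one_mul]

private noncomputable def chi : A4 →* KK where
  toFun g := ζ ^ (om g).val
  map_one' := by
    show ζ ^ (om 1).val = 1
    rw [show om 1 = 0 by decide]
    simp
  map_mul' g h := by
    show ζ ^ (om (g * h)).val = ζ ^ (om g).val * ζ ^ (om h).val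
    rw [om_mul g h, ZMod.val_add, zeta_pow_mod, pow_add]

private noncomputable def rho (g : A4) : Matrix (Fin 3) (Fin 3) ℚ :=
  (Int.castRingHom ℚ).mapMatrix (rhZ g)

private noncomputable def rhoH : A4 →* Matrix (Fin 3) (Fin 3) ℚ where
  toFun := rho
  map_one' := by show rho 1 = 1; unfold rho; rw [rhZ_one, _root_.map_one]
  map_mul' g h := by
    show rho (g * h) = rho g * rho h
    unfold rho; rw [rhZ_mul g h, _root_.map_mul]

private noncomputable def F : A4 →* ℚ × KK × Matrix (Fin 3) (Fin 3) ℚ :=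
  (1 : A4 →* ℚ).prod (chi.prod rhoH)

private noncomputable def Φ : MonoidAlgebra ℚ A4 →ₐ[ℚ]
    ℚ × KK × Matrix (Fin 3) (Fin 3) ℚ :=
  MonoidAlgebra.lift ℚ _ A4 F

private lemma F_apply (g : A4) : F g = (1, ζ ^ (om g).val, rho g) := rfl

private lemma F_mem (g : A4) : F g ∈ Φ.range :=
  ⟨MonoidAlgebra.of ℚ A4 g, MonoidAlgebra.lift_of F g⟩

private def e0 : A4 := 1
private def t1 : A4 := ⟨c[0,1] * c[2,3], by rw [Equiv.Perm.mem_alternatingGroup]; decide⟩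
private def t2 : A4 := ⟨c[0,2] * c[1,3], by rw [Equiv.Perm.mem_alternatingGroup]; decide⟩
private def t3 : A4 := ⟨c[0,3] * c[1,2], by rw [Equiv.Perm.mem_alternatingGroup]; decide⟩
private def cA : A4 := ⟨ccP, by rw [Equiv.Perm.mem_alternatingGroup]; decide⟩

private lemma rho_sum_V4 : rho e0 + rho t1 + rho t2 + rho t3 = 0 := by
  have h : rhZ e0 + rhZ t1 + rhZ t2 + rhZ t3 = 0 := by decide
  have h2 := congrArg (fun M => (Int.castRingHom ℚ).mapMatrix M) h
  simpa [rho, map_add] using h2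

private lemma zeta_sq : ζ ^ 2 + ζ + 1 = 0 := by
  have h3 : ζ ^ 3 = 1 := hζ.pow_eq_one
  have hne : ζ - 1 ≠ 0 := sub_ne_zero.2 (hζ.ne_one (by norm_num))
  have h : (ζ - 1) * (ζ ^ 2 + ζ + 1) = 0 := by linear_combination h3
  rcases mul_eq_zero.1 h with h' | h'
  · exact absurd h' hne
  · exact h'

private lemma quarter {B : Type*} [Ring B] [Algebra ℚ B] :
    (1/4 : ℚ) • ((1:B) + 1 + 1 + 1) = 1 := by
  have h4 : ((1:B) + 1 + 1 + 1) = algebraMap ℚ B 4 := by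
    rw [map_ofNat]; norm_num
  rw [Algebra.smul_def, h4, ← _root_.map_mul]
  norm_num

private lemma s_mem : ((1 : ℚ), (1 : KK), (0 : Matrix (Fin 3) (Fin 3) ℚ)) ∈ Φ.range := by
  have h := Φ.range.smul_mem
    (Φ.range.add_mem (Φ.range.add_mem (Φ.range.add_mem (F_mem e0) (F_mem t1)) (F_mem t2))
      (F_mem t3)) (1/4 : ℚ)
  have homs : om e0 = 0 ∧ om t1 = 0 ∧ om t2 = 0 ∧ om t3 = 0 := by decide
  obtain ⟨h0, h1, h2, h3⟩ := homs
  rw [F_apply, F_apply, F_apply, F_apply, h0, h1, h2, h3] at h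
  have key : (1/4 : ℚ) • (((1:ℚ), ζ ^ (0 : ZMod 3).val, rho e0) + (1, ζ ^ (0 : ZMod 3).val, rho t1)
      + (1, ζ ^ (0 : ZMod 3).val, rho t2) + (1, ζ ^ (0 : ZMod 3).val, rho t3))
      = ((1 : ℚ), (1 : KK), (0 : Matrix (Fin 3) (Fin 3) ℚ)) := by
    have c1 : (1/4 : ℚ) • ((1:ℚ) + 1 + 1 + 1) = 1 := by norm_num
    have c2 : (1/4 : ℚ) • (ζ ^ (0 : ZMod 3).val + ζ ^ (0 : ZMod 3).val + ζ ^ (0 : ZMod 3).val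
        + ζ ^ (0 : ZMod 3).val) = 1 := by
      rw [show ((0 : ZMod 3).val) = 0 from rfl, pow_zero]; exact quarter
    have c3 : (1/4 : ℚ) • (rho e0 + rho t1 + rho t2 + rho t3) = 0 := by
      rw [rho_sum_V4, smul_zero]
    exact Prod.ext_iff.2 ⟨c1, Prod.ext_iff.2 ⟨c2, c3⟩⟩
  rw [← key]; exact h

private lemma om_c : om cA = 1 := by decide
private lemma om_c2 : om (cA * cA) = 2 := by decide

private lemma e1_mem : ((1 : ℚ), (0 : KK), (0 : Matrix (Fin 3) (Fin 3) ℚ)) ∈ Φ.range := by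
  have h := Φ.range.smul_mem
    (Φ.range.mul_mem s_mem
      (Φ.range.add_mem (Φ.range.add_mem (F_mem e0) (F_mem cA)) (F_mem (cA * cA)))) (1/3 : ℚ)
  have h0 : om e0 = 0 := by decide
  rw [F_apply, F_apply, F_apply, h0, om_c, om_c2] at h
  have key : (1/3 : ℚ) • (((1:ℚ), (1:KK), (0 : Matrix (Fin 3) (Fin 3) ℚ)) *
      (((1:ℚ), ζ ^ (0 : ZMod 3).val, rho e0) + (1, ζ ^ (1 : ZMod 3).val, rho cA)
        + (1, ζ ^ (2 : ZMod 3).val, rho (cA * cA))))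
      = ((1 : ℚ), (0 : KK), (0 : Matrix (Fin 3) (Fin 3) ℚ)) := by
    have c1 : (1/3 : ℚ) • ((1:ℚ) * (1 + 1 + 1)) = 1 := by norm_num
    have c2 : (1/3 : ℚ) • ((1:KK) * (ζ ^ (0 : ZMod 3).val + ζ ^ (1 : ZMod 3).val
        + ζ ^ (2 : ZMod 3).val)) = 0 := by
      rw [show ((0 : ZMod 3).val) = 0 from rfl, show ((1 : ZMod 3).val) = 1 from rfl,
        show ((2 : ZMod 3).val) = 2 from rfl, pow_zero, pow_one, one_mul,
        show (1:KK) + ζ + ζ ^ 2 = 0 by linear_combination zeta_sq]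
      exact smul_zero _
    have c3 : (1/3 : ℚ) • ((0 : Matrix (Fin 3) (Fin 3) ℚ) * (rho e0 + rho cA + rho (cA * cA)))
        = 0 := by rw [zero_mul, smul_zero]
    exact Prod.ext_iff.2 ⟨c1, Prod.ext_iff.2 ⟨c2, c3⟩⟩
  rw [← key]; exact h

private lemma zk_mem (n : ℕ) :
    ((0 : ℚ), ζ ^ n, (0 : Matrix (Fin 3) (Fin 3) ℚ)) ∈ Φ.range := by
  induction n with
  | zero =>
    have h := Φ.range.sub_mem s_mem e1_mem
    simpa using h
  | succ n ih =>
    have hz : ((0 : ℚ), ζ, (0 : Matrix (Fin 3) (Fin 3) ℚ)) ∈ Φ.range := by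
      have h := Φ.range.sub_mem (Φ.range.mul_mem s_mem (F_mem cA)) e1_mem
      rw [F_apply, om_c] at h
      simpa [Prod.mk_mul_mk, show ((1 : ZMod 3).val) = 1 from rfl] using h
    have h := Φ.range.mul_mem ih hz
    simpa [Prod.mk_mul_mk, pow_succ] using h

private noncomputable def ι3 : Matrix (Fin 3) (Fin 3) ℚ →ₗ[ℚ] ℚ × KK × Matrix (Fin 3) (Fin 3) ℚ :=
  (LinearMap.inr ℚ ℚ (KK × Matrix (Fin 3) (Fin 3) ℚ)).comp
    (LinearMap.inr ℚ KK (Matrix (Fin 3) (Fin 3) ℚ))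

private noncomputable def ι2 : KK →ₗ[ℚ] ℚ × KK × Matrix (Fin 3) (Fin 3) ℚ :=
  (LinearMap.inr ℚ ℚ (KK × Matrix (Fin 3) (Fin 3) ℚ)).comp
    (LinearMap.inl ℚ KK (Matrix (Fin 3) (Fin 3) ℚ))

private lemma rho_slot_mem (g : A4) : ι3 (rho g) ∈ Φ.range := by
  have h := Φ.range.sub_mem (F_mem g)
    (Φ.range.mul_mem s_mem (F_mem g))
  rw [F_apply] at h
  have key : ((1:ℚ), ζ ^ (om g).val, rho g) -
      ((1:ℚ), (1:KK), (0 : Matrix (Fin 3) (Fin 3) ℚ)) * ((1:ℚ), ζ ^ (om g).val, rho g)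
      = ι3 (rho g) := by
    simp only [Prod.mk_mul_mk, one_mul, zero_mul, Prod.mk_sub_mk]
    show (_, _, _) = ((0:ℚ), (0:KK), rho g)
    norm_num
  rwa [key] at h

private lemma rho_cast (g : A4) (a b : Fin 3) : rho g a b = ((rhZ g a b : ℤ) : ℚ) := rfl

private lemma rho_orth (i j : Fin 3) :
    (4 : ℚ) • Matrix.single i j (1:ℚ) = ∑ g : A4, ((rhZ g⁻¹ j i : ℤ) : ℚ) • rho g := by
  have h := congrArg (fun M => (Int.castRingHom ℚ).mapMatrix M) (rhZ_orth i j)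
  simp only [map_sum, map_zsmul] at h
  have hE : (Int.castRingHom ℚ).mapMatrix (Matrix.single i j (1:ℤ))
      = Matrix.single i j (1:ℚ) := by
    ext a b
    simp [Matrix.single, RingHom.mapMatrix_apply, Matrix.map_apply, apply_ite]
  rw [hE] at h
  rw [show ((4:ℚ) • Matrix.single i j (1:ℚ)) = (4:ℤ) • Matrix.single i j (1:ℚ) by
    rw [← Int.cast_smul_eq_zsmul (R := ℚ)]; norm_num]
  rw [h]
  refine Finset.sum_congr rfl fun g _ => ?_
  rw [← Int.cast_smul_eq_zsmul (R := ℚ)]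
  rfl

private lemma stdBasis_slot_mem (i j : Fin 3) :
    ι3 (Matrix.single i j (1:ℚ)) ∈ Φ.range := by
  have key : Matrix.single i j (1:ℚ)
      = (1/4 : ℚ) • ∑ g : A4, ((rhZ g⁻¹ j i : ℤ) : ℚ) • rho g := by
    rw [← rho_orth, smul_smul]
    norm_num
  rw [key, _root_.map_smul, map_sum]
  refine Φ.range.smul_mem (Submodule.sum_mem (Subalgebra.toSubmodule Φ.range)
    fun g _ => ?_) _
  rw [_root_.map_smul]
  exact (Subalgebra.toSubmodule Φ.range).smul_mem _ (rho_slot_mem g)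

private lemma surjΦ : Function.Surjective Φ := by
  intro x
  obtain ⟨x1, x2, x3⟩ := x
  have hx : (x1, x2, x3) ∈ Φ.range := by
    have h1 : ((x1, (0:KK), (0 : Matrix (Fin 3) (Fin 3) ℚ)) :
        ℚ × KK × Matrix (Fin 3) (Fin 3) ℚ) ∈ Φ.range := by
      have h := Φ.range.smul_mem e1_mem x1
      simpa [Prod.smul_mk] using h
    have h2 : ((0:ℚ), x2, (0 : Matrix (Fin 3) (Fin 3) ℚ)) ∈ Φ.range := by
      let pb := hζ.powerBasis ℚ
      have hx2 : x2 = ∑ i : Fin pb.dim, pb.basis.repr x2 i • (ζ ^ (i : ℕ)) := by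
        conv_lhs => rw [← pb.basis.sum_repr x2]
        refine Finset.sum_congr rfl fun k _ => ?_
        rw [pb.coe_basis]
        rw [show pb.gen = ζ from hζ.powerBasis_gen ℚ]
        rfl
      have hid : ((0:ℚ), x2, (0 : Matrix (Fin 3) (Fin 3) ℚ)) = ι2 x2 := rfl
      rw [hid, hx2, map_sum]
      refine Submodule.sum_mem (Subalgebra.toSubmodule Φ.range) fun k _ => ?_
      rw [_root_.map_smul]
      exact (Subalgebra.toSubmodule Φ.range).smul_mem _ (zk_mem (k : ℕ))
    have h3 : ((0:ℚ), (0:KK), x3) ∈ Φ.range := by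
      have hid : ((0:ℚ), (0:KK), x3) = ι3 x3 := rfl
      rw [hid, Matrix.matrix_eq_sum_single x3]
      simp only [map_sum]
      refine Submodule.sum_mem (Subalgebra.toSubmodule Φ.range) fun a _ => ?_
      refine Submodule.sum_mem (Subalgebra.toSubmodule Φ.range) fun b _ => ?_
      have hsb : Matrix.single a b (x3 a b)
          = (x3 a b) • Matrix.single a b (1:ℚ) := by
        rw [Matrix.smul_single, smul_eq_mul, mul_one]
      rw [hsb, _root_.map_smul]
      exact (Subalgebra.toSubmodule Φ.range).smul_mem _ (stdBasis_slot_mem a b)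
    have h := Φ.range.add_mem (Φ.range.add_mem h1 h2) h3
    simpa using h
  obtain ⟨y, hy⟩ := hx
  exact ⟨y, hy⟩

private lemma finrank_eq :
    Module.finrank ℚ (MonoidAlgebra ℚ A4) =
      Module.finrank ℚ (ℚ × KK × Matrix (Fin 3) (Fin 3) ℚ) := by
  haveI : FiniteDimensional ℚ KK :=
    IsCyclotomicExtension.finiteDimensional {3} ℚ (CyclotomicField 3 ℚ)
  have hcard : Fintype.card A4 = 12 := by decide
  have h1 : Module.finrank ℚ (MonoidAlgebra ℚ A4) = 12 := by
    rw [(MonoidAlgebra.coeffLinearEquiv ℚ).finrank_eq,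
      Module.finrank_finsupp_self, hcard]
  have hK : Module.finrank ℚ KK = 2 := by
    rw [IsCyclotomicExtension.finrank (n := 3) (CyclotomicField 3 ℚ)
      (Polynomial.cyclotomic.irreducible_rat (by decide))]
    decide
  have h2 : Module.finrank ℚ (ℚ × KK × Matrix (Fin 3) (Fin 3) ℚ) = 12 := by
    rw [Module.finrank_prod, Module.finrank_prod, hK, Module.finrank_self,
      Module.finrank_matrix]
    simp
  rw [h1, h2]

/-- The rational group algebra of `A₄` decomposes as
`ℚ[A₄] ≅ ℚ × ℚ(θ) × Mat₃(ℚ)`, where `ℚ(θ)` is the third cyclotomic field. -/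
theorem rat_group_algebra_A4_iso :
    Nonempty (MonoidAlgebra ℚ A4 ≃ₐ[ℚ]
      ℚ × CyclotomicField 3 ℚ × Matrix (Fin 3) (Fin 3) ℚ) := by
  haveI : FiniteDimensional ℚ KK :=
    IsCyclotomicExtension.finiteDimensional {3} ℚ (CyclotomicField 3 ℚ)
  haveI : FiniteDimensional ℚ (MonoidAlgebra ℚ A4) :=
    LinearEquiv.finiteDimensional (MonoidAlgebra.coeffLinearEquiv ℚ).symm
  have hsurj : Function.Surjective Φ.toLinearMap := surjΦ
  have hinj : Function.Injective Φ.toLinearMap :=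
    (LinearMap.injective_iff_surjective_of_finrank_eq_finrank finrank_eq).2 hsurj
  exact ⟨AlgEquiv.ofBijective Φ ⟨hinj, hsurj⟩⟩
end

section
/- For every prime p with p ∉ {2,3}, there is an isomorphism of ℤ_p-algebras ℤ_p[A₄] ≅ ℤ_p × ℤ_p[X]/(X²+X+1) × Mat₃(ℤ_p). -/
open Polynomial

namespace A4proof

abbrev P4 := Equiv.Perm (Fin 4)

def pa1 : P4 := Equiv.swap 0 1 * Equiv.swap 2 3
def pa2 : P4 := Equiv.swap 0 2 * Equiv.swap 1 3
def pa3 : P4 := Equiv.swap 0 3 * Equiv.swap 1 2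
def pc : P4 := Equiv.swap 0 1 * Equiv.swap 1 2
def V4 : List P4 := [1, pa1, pa2, pa3]
def L12 : List P4 := V4 ++ V4.map (· * pc) ++ V4.map (· * (pc * pc))

/-- The (integral) standard 3-dimensional representation of `S₄`. -/
def Mp (σ : P4) : Matrix (Fin 3) (Fin 3) ℤ :=
  Matrix.of fun i j =>
    (if σ (Fin.castSucc j) = Fin.castSucc i then (1 : ℤ) else 0) -
    (if σ 3 = Fin.castSucc i then 1 else 0)

/-- Exponent of the 1-dimensional (cube-roots-of-unity) representations. -/
def e0p (σ : P4) : ℕ := if σ ∈ V4 then 0 else if σ ∈ V4.map (· * pc) then 1 else 2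

lemma sign_mem_L12 : ∀ σ : P4, Equiv.Perm.sign σ = 1 → σ ∈ L12 := by decide

lemma mem_L12 (a : A4) : (a : P4) ∈ L12 :=
  sign_mem_L12 _ (Equiv.Perm.mem_alternatingGroup.mp a.2)

lemma Mp_one : Mp 1 = 1 := by decide

lemma Mp_mul : ∀ σ ∈ L12, ∀ τ ∈ L12, Mp (σ * τ) = Mp σ * Mp τ := by decide

lemma e0p_mul : ∀ σ ∈ L12, ∀ τ ∈ L12, e0p (σ * τ) % 3 = (e0p σ + e0p τ) % 3 := by decide

lemma Mp_V4_sum : Mp 1 + Mp pa1 + Mp pa2 + Mp pa3 = 0 := by decide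

lemma L12_length : L12.length = 12 := rfl

def pL (k : Fin 12) : P4 := L12.get (Fin.cast L12_length.symm k)

lemma sign_pL : ∀ k : Fin 12, Equiv.Perm.sign (pL k) = 1 := by decide

def gA (k : Fin 12) : A4 := ⟨pL k, Equiv.Perm.mem_alternatingGroup.mpr (sign_pL k)⟩

lemma keyE : ∀ i j : Fin 3,
    (∑ k : Fin 12, Mp (pL k)⁻¹ j i • Mp (pL k)) = (4 : ℤ) • Matrix.single i j 1 := by
  decide

-- elements of A4
def b1 : A4 := ⟨pa1, Equiv.Perm.mem_alternatingGroup.mpr (by decide)⟩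
def b2 : A4 := ⟨pa2, Equiv.Perm.mem_alternatingGroup.mpr (by decide)⟩
def b3 : A4 := ⟨pa3, Equiv.Perm.mem_alternatingGroup.mpr (by decide)⟩
def bc : A4 := ⟨pc, Equiv.Perm.mem_alternatingGroup.mpr (by decide)⟩

noncomputable section

variable (p : ℕ) [Fact p.Prime]

def fq : Polynomial ℤ_[p] := X ^ 2 + X + 1

abbrev Q := AdjoinRoot (fq p)

abbrev Mat3 := Matrix (Fin 3) (Fin 3) ℤ_[p]

abbrev T := ℤ_[p] × Q p × Mat3 p

def x : Q p := AdjoinRoot.root (fq p)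

lemma hx : x p ^ 2 + x p + 1 = 0 := by
  have h : AdjoinRoot.mk (fq p) (X ^ 2 + X + 1 : Polynomial ℤ_[p]) = 0 :=
    AdjoinRoot.mk_self (f := fq p)
  unfold x
  simpa only [map_add, map_pow, map_one, AdjoinRoot.mk_X] using h

lemma hx3 : x p ^ 3 = 1 := by
  have h := hx p
  linear_combination (x p - 1) * h

def θ : Matrix (Fin 3) (Fin 3) ℤ →+* Mat3 p := (Int.castRingHom ℤ_[p]).mapMatrix

/-- The trivial 1-dim representation, linearized. -/
def hom1 : A4 →* ℤ_[p] := 1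

/-- The nontrivial 1-dim representation, into `ℤ_p[X]/(X²+X+1)`. -/
def hom2 : A4 →* Q p where
  toFun a := x p ^ e0p (a : P4)
  map_one' := by
    show x p ^ e0p ((1 : A4) : P4) = 1
    rw [show e0p ((1 : A4) : P4) = 0 from by decide, pow_zero]
  map_mul' a b := by
    have hmem_a := mem_L12 a
    have hmem_b := mem_L12 b
    show x p ^ e0p ((a * b : A4) : P4) = x p ^ e0p ((a : A4) : P4) * x p ^ e0p ((b : A4) : P4)
    have hco : ((a * b : A4) : P4) = (a : P4) * (b : P4) := rfl
    rw [hco]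
    calc x p ^ e0p ((a : P4) * b) = x p ^ (e0p ((a : P4) * b) % 3) :=
          pow_eq_pow_mod _ (hx3 p)
      _ = x p ^ ((e0p (a : P4) + e0p (b : P4)) % 3) := by
          rw [e0p_mul _ hmem_a _ hmem_b]
      _ = x p ^ (e0p (a : P4) + e0p (b : P4)) := (pow_eq_pow_mod _ (hx3 p)).symm
      _ = x p ^ e0p (a : P4) * x p ^ e0p (b : P4) := pow_add _ _ _

/-- The 3-dim representation over `ℤ`. -/
def MpA : A4 →* Matrix (Fin 3) (Fin 3) ℤ where
  toFun a := Mp (a : P4)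
  map_one' := Mp_one
  map_mul' a b := Mp_mul _ (mem_L12 a) _ (mem_L12 b)

/-- The 3-dim representation over `ℤ_p`. -/
def hom3 : A4 →* Mat3 p := (θ p).toMonoidHom.comp MpA

def ρ : A4 →* T p := (hom1 p).prod ((hom2 p).prod (hom3 p))

def φ : MonoidAlgebra ℤ_[p] A4 →ₐ[ℤ_[p]] T p :=
  MonoidAlgebra.lift ℤ_[p] (T p) A4 (ρ p)

lemma ρ_apply (a : A4) : ρ p a = (1, x p ^ e0p (a : P4), θ p (Mp (a : P4))) := rfl

abbrev S := (φ p).range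

lemma ρ_mem (a : A4) : ρ p a ∈ S p := by
  rw [AlgHom.mem_range]
  refine ⟨MonoidAlgebra.single a 1, ?_⟩
  show (MonoidAlgebra.lift ℤ_[p] (T p) A4 (ρ p)) (MonoidAlgebra.single a 1) = ρ p a
  rw [MonoidAlgebra.lift_single, one_smul]

lemma smul_mem_cancel {R A : Type*} [CommSemiring R] [Semiring A] [Algebra R A]
    (S : Subalgebra R A) {c : R} (hc : IsUnit c) {w : A} (h : c • w ∈ S) : w ∈ S := by
  obtain ⟨u, rfl⟩ := hc
  have h2 := S.smul_mem h ((u⁻¹ : Rˣ) : R)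
  rwa [smul_smul, Units.inv_mul, one_smul] at h2

variable {p}

lemma isUnit_ofNat (n : ℕ) (hn : ¬ p ∣ n) : IsUnit ((n : ℕ) : ℤ_[p]) := by
  rw [PadicInt.isUnit_iff]
  refine le_antisymm (PadicInt.norm_le_one _) (not_lt.mp fun hlt => hn ?_)
  have : ((n : ℤ) : ℤ_[p]) = ((n : ℕ) : ℤ_[p]) := by push_cast; ring
  rw [← this] at hlt
  exact_mod_cast (PadicInt.norm_int_lt_one_iff_dvd _).mp hlt

lemma isUnit_four (hp2 : p ≠ 2) : IsUnit ((4 : ℕ) : ℤ_[p]) := by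
  refine isUnit_ofNat 4 fun h => hp2 ?_
  have hp := (Fact.out : p.Prime)
  have h2 : p ∣ 2 ^ 2 := by norm_num; exact h
  exact (Nat.prime_dvd_prime_iff_eq hp Nat.prime_two).mp (hp.dvd_of_dvd_pow h2)

lemma isUnit_three (hp3 : p ≠ 3) : IsUnit ((3 : ℕ) : ℤ_[p]) := by
  refine isUnit_ofNat 3 fun h => hp3 ?_
  have hp := (Fact.out : p.Prime)
  exact (Nat.prime_dvd_prime_iff_eq hp Nat.prime_three).mp h

variable (p)

lemma hq_mem : (((4 : ℕ) : ℤ_[p]), ((4 : ℕ) : Q p), (0 : Mat3 p)) ∈ S p := by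
  have h := (S p).add_mem ((S p).add_mem ((S p).add_mem ((S p).one_mem)
    (ρ_mem p b1)) (ρ_mem p b2)) (ρ_mem p b3)
  have he : (1 : T p) + ρ p b1 + ρ p b2 + ρ p b3 =
      (((4 : ℕ) : ℤ_[p]), ((4 : ℕ) : Q p), (0 : Mat3 p)) := by
    rw [ρ_apply, ρ_apply, ρ_apply]
    refine Prod.ext ?_ (Prod.ext ?_ ?_)
    · show (1 : ℤ_[p]) + 1 + 1 + 1 = _
      norm_num
    · show (1 : Q p) + x p ^ e0p ((b1 : A4) : P4) + x p ^ e0p ((b2 : A4) : P4)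
        + x p ^ e0p ((b3 : A4) : P4) = _
      rw [show e0p ((b1 : A4) : P4) = 0 from by decide,
          show e0p ((b2 : A4) : P4) = 0 from by decide,
          show e0p ((b3 : A4) : P4) = 0 from by decide]
      norm_num
    · show (1 : Mat3 p) + θ p (Mp ((b1 : A4) : P4)) + θ p (Mp ((b2 : A4) : P4))
        + θ p (Mp ((b3 : A4) : P4)) = 0
      calc (1 : Mat3 p) + θ p (Mp pa1) + θ p (Mp pa2) + θ p (Mp pa3)
          = θ p (Mp 1 + Mp pa1 + Mp pa2 + Mp pa3) := by
            rw [map_add, map_add, map_add, Mp_one, map_one]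
        _ = θ p 0 := by rw [Mp_V4_sum]
        _ = 0 := map_zero _
  rwa [he] at h

def u1 : T p := (1, 1, 0)

lemma u1_mem (hp2 : p ≠ 2) : u1 p ∈ S p := by
  refine smul_mem_cancel _ (isUnit_four hp2) ?_
  have he : ((4 : ℕ) : ℤ_[p]) • u1 p =
      (((4 : ℕ) : ℤ_[p]), ((4 : ℕ) : Q p), (0 : Mat3 p)) := by
    refine Prod.ext ?_ (Prod.ext ?_ ?_)
    · show ((4 : ℕ) : ℤ_[p]) • (1 : ℤ_[p]) = _
      rw [smul_eq_mul, mul_one]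
    · show ((4 : ℕ) : ℤ_[p]) • (1 : Q p) = _
      rw [Algebra.smul_def, mul_one, map_natCast]
    · show ((4 : ℕ) : ℤ_[p]) • (0 : Mat3 p) = 0
      rw [smul_zero]
  rw [he]
  exact hq_mem p

def rel : T p := (1, x p, 0)

lemma rel_mem (hp2 : p ≠ 2) : rel p ∈ S p := by
  have h := (S p).mul_mem (u1_mem p hp2) (ρ_mem p bc)
  have he : u1 p * ρ p bc = rel p := by
    rw [ρ_apply]
    refine Prod.ext ?_ (Prod.ext ?_ ?_)
    · show (1 : ℤ_[p]) * 1 = 1; rw [mul_one]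
    · show (1 : Q p) * x p ^ e0p ((bc : A4) : P4) = x p
      rw [show e0p ((bc : A4) : P4) = 1 from by decide, pow_one, one_mul]
    · show (0 : Mat3 p) * _ = 0; rw [zero_mul]
  rwa [he] at h

def zel : T p := (1, 0, 0)

lemma zel_mem (hp2 : p ≠ 2) (hp3 : p ≠ 3) : zel p ∈ S p := by
  refine smul_mem_cancel _ (isUnit_three hp3) ?_
  have h := (S p).add_mem ((S p).add_mem (u1_mem p hp2) (rel_mem p hp2))
    ((S p).mul_mem (rel_mem p hp2) (rel_mem p hp2))
  have he : u1 p + rel p + rel p * rel p = ((3 : ℕ) : ℤ_[p]) • zel p := by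
    refine Prod.ext ?_ (Prod.ext ?_ ?_)
    · show (1 : ℤ_[p]) + 1 + 1 * 1 = ((3 : ℕ) : ℤ_[p]) • (1 : ℤ_[p])
      rw [smul_eq_mul, mul_one]; norm_num
    · show (1 : Q p) + x p + x p * x p = ((3 : ℕ) : ℤ_[p]) • (0 : Q p)
      rw [smul_zero]
      have := hx p
      linear_combination this
    · show (0 : Mat3 p) + 0 + 0 * 0 = ((3 : ℕ) : ℤ_[p]) • (0 : Mat3 p)
      simp
  rwa [← he]

lemma b10_mem (hp2 : p ≠ 2) (hp3 : p ≠ 3) : ((0, 1, 0) : T p) ∈ S p := by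
  have h := (S p).sub_mem (u1_mem p hp2) (zel_mem p hp2 hp3)
  have he : u1 p - zel p = ((0, 1, 0) : T p) := by
    refine Prod.ext ?_ (Prod.ext ?_ ?_) <;> simp [u1, zel]
  rwa [he] at h

lemma bx_mem (hp2 : p ≠ 2) (hp3 : p ≠ 3) : ((0, x p, 0) : T p) ∈ S p := by
  have h := (S p).sub_mem (rel_mem p hp2) (zel_mem p hp2 hp3)
  have he : rel p - zel p = ((0, x p, 0) : T p) := by
    refine Prod.ext ?_ (Prod.ext ?_ ?_) <;> simp [rel, zel]
  rwa [he] at h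

lemma oneM_mem (hp2 : p ≠ 2) : ((0, 0, 1) : T p) ∈ S p := by
  have h := (S p).sub_mem ((S p).one_mem) (u1_mem p hp2)
  have he : (1 : T p) - u1 p = ((0, 0, 1) : T p) := by
    refine Prod.ext ?_ (Prod.ext ?_ ?_) <;> simp [u1]
  rwa [he] at h

lemma matblock_mem (hp2 : p ≠ 2) (a : A4) :
    ((0, 0, θ p (Mp (a : P4))) : T p) ∈ S p := by
  have h := (S p).mul_mem (ρ_mem p a) (oneM_mem p hp2)
  have he : ρ p a * ((0, 0, 1) : T p) = ((0, 0, θ p (Mp (a : P4))) : T p) := by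
    rw [ρ_apply]
    refine Prod.ext ?_ (Prod.ext ?_ ?_)
    · show (1 : ℤ_[p]) * 0 = 0; rw [mul_zero]
    · show x p ^ _ * (0 : Q p) = 0; rw [mul_zero]
    · show θ p (Mp (a : P4)) * 1 = _; rw [mul_one]
  rwa [he] at h

def jM : Mat3 p →ₗ[ℤ_[p]] T p :=
  (LinearMap.inr ℤ_[p] ℤ_[p] (Q p × Mat3 p)).comp (LinearMap.inr ℤ_[p] (Q p) (Mat3 p))

lemma jM_apply (m : Mat3 p) : jM p m = ((0, 0, m) : T p) := rfl

lemma θ_stdBasisMatrix (i j : Fin 3) :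
    θ p (Matrix.single i j 1) = Matrix.single i j (1 : ℤ_[p]) := by
  ext a b
  simp [θ, Matrix.single, RingHom.mapMatrix_apply, Matrix.map_apply, apply_ite
    (Int.cast : ℤ → ℤ_[p])]

lemma stdBasis_mem (hp2 : p ≠ 2) (i j : Fin 3) :
    ((0, 0, Matrix.single i j (1 : ℤ_[p])) : T p) ∈ S p := by
  refine smul_mem_cancel _ (isUnit_four hp2) ?_
  have hmem : (∑ k : Fin 12, ((Mp (pL k)⁻¹ j i : ℤ) : ℤ_[p]) •
      ((0, 0, θ p (Mp (pL k))) : T p)) ∈ S p := by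
    refine Subalgebra.sum_mem _ fun k _ => Subalgebra.smul_mem _ ?_ _
    exact matblock_mem p hp2 (gA k)
  have he : (∑ k : Fin 12, ((Mp (pL k)⁻¹ j i : ℤ) : ℤ_[p]) •
      ((0, 0, θ p (Mp (pL k))) : T p)) =
      ((4 : ℕ) : ℤ_[p]) • ((0, 0, Matrix.single i j (1 : ℤ_[p])) : T p) := by
    have hmat : (∑ k : Fin 12, ((Mp (pL k)⁻¹ j i : ℤ) : ℤ_[p]) • θ p (Mp (pL k))) =
        ((4 : ℕ) : ℤ_[p]) • Matrix.single i j (1 : ℤ_[p]) := by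
      have h1 := congrArg (θ p) (keyE i j)
      rw [map_sum] at h1
      simp only [map_zsmul] at h1
      calc (∑ k : Fin 12, ((Mp (pL k)⁻¹ j i : ℤ) : ℤ_[p]) • θ p (Mp (pL k)))
          = (∑ k : Fin 12, (Mp (pL k)⁻¹ j i) • θ p (Mp (pL k))) := by
            simp only [Int.cast_smul_eq_zsmul]
        _ = (4 : ℤ) • θ p (Matrix.single i j 1) := h1
        _ = ((4 : ℕ) : ℤ_[p]) • Matrix.single i j (1 : ℤ_[p]) := by
            rw [θ_stdBasisMatrix]
            rw [show (((4 : ℕ)) : ℤ_[p]) = (((4 : ℤ)) : ℤ_[p]) from by push_cast; ring,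
              Int.cast_smul_eq_zsmul]
    calc (∑ k : Fin 12, ((Mp (pL k)⁻¹ j i : ℤ) : ℤ_[p]) • ((0, 0, θ p (Mp (pL k))) : T p))
        = (∑ k : Fin 12, ((Mp (pL k)⁻¹ j i : ℤ) : ℤ_[p]) • jM p (θ p (Mp (pL k)))) := rfl
      _ = jM p (∑ k : Fin 12, ((Mp (pL k)⁻¹ j i : ℤ) : ℤ_[p]) • θ p (Mp (pL k))) := by
          rw [map_sum]
          simp only [LinearMap.map_smul]
      _ = jM p (((4 : ℕ) : ℤ_[p]) • Matrix.single i j (1 : ℤ_[p])) := by rw [hmat]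
      _ = ((4 : ℕ) : ℤ_[p]) • ((0, 0, Matrix.single i j (1 : ℤ_[p])) : T p) := by
          rw [LinearMap.map_smul, jM_apply]
  rwa [he] at hmem

lemma monic_fq : (fq p).Monic := by unfold fq; monicity!

lemma natDegree_fq : (fq p).natDegree = 2 := by unfold fq; compute_degree!

def pb : PowerBasis ℤ_[p] (Q p) := AdjoinRoot.powerBasis' (monic_fq p)

lemma pb_dim : (pb p).dim = 2 := by
  rw [pb, AdjoinRoot.powerBasis'_dim, natDegree_fq]

def bQ : Module.Basis (Fin 2) ℤ_[p] (Q p) := (pb p).basis.reindex (finCongr (pb_dim p))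

lemma bQ_zero : bQ p 0 = 1 := by
  rw [bQ, Module.Basis.reindex_apply, (pb p).basis_eq_pow]
  norm_num

lemma bQ_one : bQ p 1 = x p := by
  rw [bQ, Module.Basis.reindex_apply, (pb p).basis_eq_pow]
  have : (pb p).gen = x p := AdjoinRoot.powerBasis'_gen _
  rw [show (((finCongr (pb_dim p)).symm 1 : Fin (pb p).dim) : ℕ) = 1 from rfl, pow_one, this]

def bT : Module.Basis (Fin 1 ⊕ Fin 2 ⊕ Fin 3 × Fin 3) ℤ_[p] (T p) :=
  (Module.Basis.singleton (Fin 1) ℤ_[p]).prod ((bQ p).prod (Matrix.stdBasis ℤ_[p] (Fin 3) (Fin 3)))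

lemma bT_mem (hp2 : p ≠ 2) (hp3 : p ≠ 3) (i : Fin 1 ⊕ Fin 2 ⊕ Fin 3 × Fin 3) :
    bT p i ∈ S p := by
  unfold bT
  rcases i with i | j | ⟨i, j⟩
  · have he : ((Module.Basis.singleton (Fin 1) ℤ_[p]).prod
        ((bQ p).prod (Matrix.stdBasis ℤ_[p] (Fin 3) (Fin 3)))) (Sum.inl i) = zel p := by
      refine Prod.ext ?_ ?_
      · rw [Module.Basis.prod_apply_inl_fst, Module.Basis.singleton_apply]; rfl
      · rw [Module.Basis.prod_apply_inl_snd]; rfl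
    rw [he]; exact zel_mem p hp2 hp3
  · have he : ((Module.Basis.singleton (Fin 1) ℤ_[p]).prod
        ((bQ p).prod (Matrix.stdBasis ℤ_[p] (Fin 3) (Fin 3)))) (Sum.inr (Sum.inl j)) =
        ((0 : ℤ_[p]), bQ p j, (0 : Mat3 p)) := by
      refine Prod.ext ?_ ?_
      · rw [Module.Basis.prod_apply_inr_fst]
      · rw [Module.Basis.prod_apply_inr_snd]
        refine Prod.ext ?_ ?_
        · rw [Module.Basis.prod_apply_inl_fst]
        · rw [Module.Basis.prod_apply_inl_snd]
    rw [he]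
    have h0 : ((0 : ℤ_[p]), bQ p 0, (0 : Mat3 p)) ∈ S p := by
      rw [bQ_zero p]; exact b10_mem p hp2 hp3
    have h1 : ((0 : ℤ_[p]), bQ p 1, (0 : Mat3 p)) ∈ S p := by
      rw [bQ_one p]; exact bx_mem p hp2 hp3
    fin_cases j
    · exact h0
    · exact h1
  · have he : ((Module.Basis.singleton (Fin 1) ℤ_[p]).prod
        ((bQ p).prod (Matrix.stdBasis ℤ_[p] (Fin 3) (Fin 3)))) (Sum.inr (Sum.inr (i, j))) =
        ((0 : ℤ_[p]), (0 : Q p), Matrix.single i j (1 : ℤ_[p])) := by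
      refine Prod.ext ?_ ?_
      · rw [Module.Basis.prod_apply_inr_fst]
      · rw [Module.Basis.prod_apply_inr_snd]
        refine Prod.ext ?_ ?_
        · rw [Module.Basis.prod_apply_inr_fst]
        · rw [Module.Basis.prod_apply_inr_snd, Matrix.stdBasis_eq_single]
    rw [he]
    exact stdBasis_mem p hp2 i j

lemma φ_surjective (hp2 : p ≠ 2) (hp3 : p ≠ 3) : Function.Surjective (φ p) := by
  rw [← AlgHom.range_eq_top]
  rw [← Algebra.toSubmodule_eq_top, eq_top_iff, ← (bT p).span_eq]
  exact Submodule.span_le.mpr (Set.range_subset_iff.mpr (bT_mem p hp2 hp3))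

def bA : Module.Basis A4 ℤ_[p] (MonoidAlgebra ℤ_[p] A4) := MonoidAlgebra.basis A4 ℤ_[p]

lemma card_A4 : Fintype.card A4 = 12 := by decide

def eqv : T p ≃ₗ[ℤ_[p]] MonoidAlgebra ℤ_[p] A4 :=
  (bT p).equiv (bA p) (Fintype.equivOfCardEq (by simp [card_A4]))

lemma φ_injective (hp2 : p ≠ 2) (hp3 : p ≠ 3) : Function.Injective (φ p) := by
  have hfin : Module.Finite ℤ_[p] (MonoidAlgebra ℤ_[p] A4) := Module.Finite.of_basis (bA p)
  have hend : Function.Surjective ⇑((eqv p).toLinearMap ∘ₗ (φ p).toLinearMap) := by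
    have := (eqv p).surjective.comp (φ_surjective p hp2 hp3)
    simpa [LinearMap.coe_comp] using this
  have hinj := OrzechProperty.injective_of_surjective_endomorphism
    ((eqv p).toLinearMap ∘ₗ (φ p).toLinearMap) hend
  intro a b hab
  refine hinj ?_
  simp only [LinearMap.coe_comp, Function.comp_apply, LinearEquiv.coe_coe, AlgHom.toLinearMap_apply]
  rw [hab]

def finalEquiv (hp2 : p ≠ 2) (hp3 : p ≠ 3) :
    MonoidAlgebra ℤ_[p] A4 ≃ₐ[ℤ_[p]] T p :=
  AlgEquiv.ofBijective (φ p) ⟨φ_injective p hp2 hp3, φ_surjective p hp2 hp3⟩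

end
end A4proof

/-- For every prime `p ∉ {2,3}` there is an isomorphism of `ℤ_p`-algebras
`ℤ_p[A₄] ≅ ℤ_p × ℤ_p[X]/(X²+X+1) × Mat₃(ℤ_p)`. -/
theorem padic_group_algebra_A4_iso (p : ℕ) [Fact p.Prime] (hp2 : p ≠ 2) (hp3 : p ≠ 3) :
    Nonempty (MonoidAlgebra ℤ_[p] A4 ≃ₐ[ℤ_[p]]
      ℤ_[p] × (Polynomial ℤ_[p] ⧸ Ideal.span {(X : Polynomial ℤ_[p]) ^ 2 + X + 1}) ×
        Matrix (Fin 3) (Fin 3) ℤ_[p]) := by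
  exact ⟨A4proof.finalEquiv p hp2 hp3⟩
end

section
/- There is an isomorphism of ℤ₃-algebras ℤ₃[A₄] ≅ ℤ₃[C₃] × Mat₃(ℤ₃), where C₃ is the cyclic group of order 3. -/
open Equiv

/-- The cyclic group of order 3. -/
abbrev C3 : Type := Multiplicative (ZMod 3)

namespace A4iso

abbrev Tidx : Type := C3 ⊕ (Fin 3 × Fin 3)

/-- value of the quotient map A4 → ZMod 3 (action on the three pairings). -/
def pifun (s : Perm (Fin 4)) : ZMod 3 :=
  if s 0 = 0 then (s 1 : ℕ) - 1
  else if s 1 = 0 then (s 0 : ℕ) - 1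
  else (5 : ZMod 3) - (s 0 : ℕ) - (s 1 : ℕ)

/-- the standard 3-dimensional representation of `S₄` over `ℤ`. -/
def rhoZ (s : Perm (Fin 4)) : Matrix (Fin 3) (Fin 3) ℤ :=
  Matrix.of fun j i => (if s i.castSucc = j.castSucc then 1 else 0)
    - (if s 3 = j.castSucc then 1 else 0)

def pi4 : A4 →* C3 where
  toFun g := Multiplicative.ofAdd (pifun g.val)
  map_one' := by decide
  map_mul' := by decide

def rhoZhom : Perm (Fin 4) →* Matrix (Fin 3) (Fin 3) ℤ where
  toFun := rhoZ
  map_one' := by decide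
  map_mul' := by decide

noncomputable def rho : A4 →* Matrix (Fin 3) (Fin 3) ℤ_[3] :=
  ((Int.castRingHom ℤ_[3]).mapMatrix.toMonoidHom).comp
    (rhoZhom.comp (alternatingGroup (Fin 4)).subtype)

noncomputable abbrev T : Type := MonoidAlgebra ℤ_[3] C3 × Matrix (Fin 3) (Fin 3) ℤ_[3]

noncomputable def f : A4 →* T :=
  ((MonoidAlgebra.of ℤ_[3] C3).comp pi4).prod rho

noncomputable def φ : MonoidAlgebra ℤ_[3] A4 →ₐ[ℤ_[3]] T :=
  MonoidAlgebra.lift ℤ_[3] T A4 f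

/-- integer matrix of φ -/
def MZ : Matrix Tidx A4 ℤ :=
  Matrix.of fun j g => Sum.elim
    (fun c => if Multiplicative.ofAdd (pifun g.val) = c then 1 else 0)
    (fun p => rhoZ g.val p.1 p.2) j

def tbl : Array (Array ℤ) :=
#[#[0, 0, 0, 0, 0, 0, 0, 0, 0, 0, 0, 0],
#[1, 0, 0, 1, 0, 0, 0, 1, 0, 0, 0, 1],
#[0, 1, 0, 1, 0, -1, 0, 0, -1, 0, 1, -1],
#[0, 0, 1, 1, -1, 0, 0, -1, 1, 0, -1, 0],
#[1, 0, 0, 0, 1, -1, 1, 0, -1, 0, 0, -1],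
#[0, 0, 0, 0, 0, 0, 0, 0, 0, 0, 0, 0],
#[0, 0, 1, 0, 0, 1, 1, 0, 0, 0, 1, 0],
#[0, 1, 0, 0, -1, 0, 1, -1, 0, 0, -1, 1],
#[0, 1, 0, 0, 1, 0, 0, 0, 1, 1, 0, 0],
#[0, 0, 1, 0, 0, -1, 0, 1, -1, 1, 0, -1],
#[0, 0, 0, 0, 0, 0, 0, 0, 0, 0, 0, 0],
#[1, 0, 0, 0, -1, 1, 0, -1, 0, 1, -1, 0],
#[0, 0, 1, -1, 1, 0, -1, 0, 0, -1, 0, 1],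
#[0, 1, 0, -1, 0, 1, -1, 1, 0, -1, 0, 0],
#[1, 0, 0, -1, 0, 0, -1, 0, 1, -1, 1, 0],
#[0, 0, 0, 0, 0, 0, 0, 0, 0, 0, 0, 0]]

def jdx : Tidx → ℕ :=
  Sum.elim (fun c => (Multiplicative.toAdd c).val) (fun p => 3 + 3 * p.1.val + p.2.val)

/-- integer matrix: 4 · (inverse of MZ) -/
def NZ : Matrix A4 Tidx ℤ :=
  Matrix.of fun g j => ((tbl.getD (4 * (g.val 0).val + (g.val 1).val) #[]).getD (jdx j) 0)

set_option maxRecDepth 10000 in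
lemma hMN : MZ * NZ = (4 : ℤ) • 1 := by decide

set_option maxRecDepth 10000 in
lemma hNM : NZ * MZ = (4 : ℤ) • 1 := by decide

noncomputable def Mp : Matrix Tidx A4 ℤ_[3] := MZ.map (Int.castRingHom ℤ_[3])
noncomputable def Np : Matrix A4 Tidx ℤ_[3] := NZ.map (Int.castRingHom ℤ_[3])

noncomputable def bS : Module.Basis A4 ℤ_[3] (MonoidAlgebra ℤ_[3] A4) := MonoidAlgebra.basis A4 ℤ_[3]

noncomputable def bT : Module.Basis Tidx ℤ_[3] T :=
  (MonoidAlgebra.basis C3 ℤ_[3]).prod (Matrix.stdBasis ℤ_[3] (Fin 3) (Fin 3))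

lemma key : φ.toLinearMap = Matrix.toLin bS bT Mp := by
  apply bS.ext
  intro g
  rw [Matrix.toLin_self]
  have hφ : φ.toLinearMap (bS g) = ((MonoidAlgebra.single (pi4 g) 1 : MonoidAlgebra ℤ_[3] C3), rho g) := by
    show φ (MonoidAlgebra.single g 1) = _
    rw [show (MonoidAlgebra.single g (1:ℤ_[3])) = MonoidAlgebra.single g (1:ℤ_[3]) from rfl]
    rw [φ, MonoidAlgebra.lift_single, one_smul]
    rfl
  have hinl : ∀ c : C3, bT (Sum.inl c)
      = ((MonoidAlgebra.single c 1 : MonoidAlgebra ℤ_[3] C3), (0 : Matrix (Fin 3) (Fin 3) ℤ_[3])) := by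
    intro c
    refine Prod.ext ?_ ?_
    · rw [bT, Module.Basis.prod_apply_inl_fst]; exact MonoidAlgebra.basis_apply _ c
    · rw [bT, Module.Basis.prod_apply_inl_snd]
  have hinr : ∀ p : Fin 3 × Fin 3, bT (Sum.inr p)
      = ((0 : MonoidAlgebra ℤ_[3] C3), Matrix.single p.1 p.2 (1 : ℤ_[3])) := by
    intro p
    refine Prod.ext ?_ ?_
    · rw [bT, Module.Basis.prod_apply_inr_fst]
    · rw [bT, Module.Basis.prod_apply_inr_snd, Matrix.stdBasis_eq_single]
  have hMinl : ∀ c : C3, Mp (Sum.inl c) g = if pi4 g = c then 1 else 0 := by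
    intro c
    simp [Mp, MZ, Matrix.map_apply, apply_ite (fun z : ℤ => (z : ℤ_[3])), pi4]
    congr
  have hMinr : ∀ p : Fin 3 × Fin 3, Mp (Sum.inr p) g = rho g p.1 p.2 := fun p => rfl
  have e1 : ∑ c : C3, Mp (Sum.inl c) g • bT (Sum.inl c)
      = ((MonoidAlgebra.single (pi4 g) 1 : MonoidAlgebra ℤ_[3] C3), (0 : Matrix (Fin 3) (Fin 3) ℤ_[3])) := by
    rw [Finset.sum_congr rfl (fun c _ => by rw [hMinl, hinl])]
    simp [ite_smul, Finset.sum_ite_eq]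
  have e2 : ∑ p : Fin 3 × Fin 3, Mp (Sum.inr p) g • bT (Sum.inr p)
      = ((0 : MonoidAlgebra ℤ_[3] C3), rho g) := by
    rw [Finset.sum_congr rfl (fun p _ => by rw [hMinr, hinr])]
    refine Prod.ext (by simp [Prod.fst_sum]) ?_
    simp only [Prod.snd_sum, Prod.smul_mk, Prod.mk.injEq, Matrix.smul_single,
      smul_eq_mul, mul_one]
    rw [Fintype.sum_prod_type]
    exact (Matrix.matrix_eq_sum_single (rho g)).symm
  rw [hφ, Fintype.sum_sum_type, e1, e2, Prod.mk_add_mk, add_zero, zero_add]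

lemma unit4 : IsUnit (4 : ℤ_[3]) := by
  rw [PadicInt.isUnit_iff]
  refine le_antisymm (PadicInt.norm_le_one _) (not_lt.mp ?_)
  have h4 : ((4 : ℤ) : ℤ_[3]) = (4 : ℤ_[3]) := by norm_cast
  rw [← h4, PadicInt.norm_int_lt_one_iff_dvd]
  decide

lemma smul_one_map : (((4 : ℤ) • (1 : Matrix Tidx Tidx ℤ)).map (Int.castRingHom ℤ_[3]))
    = (4 : ℤ_[3]) • (1 : Matrix Tidx Tidx ℤ_[3]) := by
  ext i j
  simp only [Matrix.map_apply, Matrix.smul_apply, Matrix.one_apply, smul_eq_mul, mul_ite,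
    mul_one, mul_zero]
  split <;> simp

lemma smul_one_map' : (((4 : ℤ) • (1 : Matrix A4 A4 ℤ)).map (Int.castRingHom ℤ_[3]))
    = (4 : ℤ_[3]) • (1 : Matrix A4 A4 ℤ_[3]) := by
  ext i j
  simp only [Matrix.map_apply, Matrix.smul_apply, Matrix.one_apply, smul_eq_mul, mul_ite,
    mul_one, mul_zero]
  split <;> simp

end A4iso

open A4iso in
/-- There is an isomorphism of `ℤ₃`-algebras `ℤ₃[A₄] ≅ ℤ₃[C₃] × Mat₃(ℤ₃)`. -/
theorem padic3_group_algebra_A4_iso :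
    Nonempty (MonoidAlgebra ℤ_[3] A4 ≃ₐ[ℤ_[3]]
      MonoidAlgebra ℤ_[3] C3 × Matrix (Fin 3) (Fin 3) ℤ_[3]) := by
  obtain ⟨c, hc⟩ := unit4.exists_right_inv
  set Np' : Matrix A4 Tidx ℤ_[3] := c • Np with hNp'
  have h1 : Mp * Np' = 1 := by
    rw [hNp', Matrix.mul_smul, Mp, Np, ← Matrix.map_mul, hMN, smul_one_map,
      smul_smul, mul_comm c 4, hc, one_smul]
  have h2 : Np' * Mp = 1 := by
    rw [hNp', Matrix.smul_mul, Mp, Np, ← Matrix.map_mul, hNM, smul_one_map',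
      smul_smul, mul_comm c 4, hc, one_smul]
  have hbij : Function.Bijective φ := by
    have : Function.Bijective (Matrix.toLin bS bT Mp) :=
      (Matrix.toLinOfInv bS bT h1 h2).bijective
    rwa [← key] at this
  exact ⟨AlgEquiv.ofBijective φ hbij⟩
end
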